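/- Let X be a geodesic metric space, let x, y, z ∈ X and let p ≥ 0. If the Gromov product (x|z)_y = ½(d(y,x) + d(y,z) − d(x,z)) satisfies (x|z)_y ≤ p, then for every geodesic α : [0, d(x,y)] → X from x to y and every geodesic β : [0, d(y,z)] → X from y to z, the concatenation ζ : [0, d(x,y) + d(y,z)] → X (defined by ζ(t) = α(t) for t ≤ d(x,y) and ζ(t) = β(t − d(x,y)) for t ≥ d(x,y)) is a (1,2p)-quasi-geodesic. -/
import Mathlib


namespace Paper

variable {X : Type*} [MetricSpace X]

/-- `α : [0,a] → X` is a geodesic from `x` to `y` (necessarily `a = dist x y`). -/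
def IsGeodesicSegment (a : ℝ) (α : ℝ → X) (x y : X) : Prop :=
  0 ≤ a ∧ α 0 = x ∧ α a = y ∧
    ∀ s ∈ Set.Icc (0 : ℝ) a, ∀ t ∈ Set.Icc (0 : ℝ) a, dist (α s) (α t) = |s - t|

/-- `α : [0,a] → X` is a `(lam,k)`-quasi-geodesic. -/
def IsQuasiGeodesic (lam k a : ℝ) (α : ℝ → X) : Prop :=
  0 ≤ a ∧ ∀ s ∈ Set.Icc (0 : ℝ) a, ∀ t ∈ Set.Icc (0 : ℝ) a,
    lam⁻¹ * |s - t| - k ≤ dist (α s) (α t) ∧ dist (α s) (α t) ≤ lam * |s - t| + k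

/-- `X` is a geodesic metric space. -/
def GeodesicSpace (X : Type*) [MetricSpace X] : Prop :=
  ∀ x y : X, ∃ α : ℝ → X, IsGeodesicSegment (dist x y) α x y

/-- `X` is `δ`-hyperbolic: every point of a side of a geodesic triangle is within
distance `δ` of the union of the other two sides (all three sides are covered since
`x, y, z` and the geodesics are universally quantified, hence may be cyclically permuted). -/
def DeltaHyperbolic (δ : ℝ) (X : Type*) [MetricSpace X] : Prop :=
  ∀ x y z : X, ∀ α β γ : ℝ → X,
    IsGeodesicSegment (dist x y) α x y → IsGeodesicSegment (dist y z) β y z →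
    IsGeodesicSegment (dist z x) γ z x →
    ∀ s ∈ Set.Icc (0 : ℝ) (dist x y),
      ∃ t, (t ∈ Set.Icc (0 : ℝ) (dist y z) ∧ dist (α s) (β t) ≤ δ) ∨
           (t ∈ Set.Icc (0 : ℝ) (dist z x) ∧ dist (α s) (γ t) ≤ δ)

/-- If `(x|z)_y ≤ p`, then the concatenation of any geodesic from `x` to `y` with any
geodesic from `y` to `z` is a `(1,2p)`-quasi-geodesic. -/
theorem concat_quasigeodesic_of_gromov_le
    (hgeo : GeodesicSpace X) (x y z : X) (p : ℝ) (hp : 0 ≤ p)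
    (hgp : (dist y x + dist y z - dist x z) / 2 ≤ p)
    (α β : ℝ → X)
    (hα : IsGeodesicSegment (dist x y) α x y)
    (hβ : IsGeodesicSegment (dist y z) β y z) :
    IsQuasiGeodesic 1 (2 * p) (dist x y + dist y z)
      (fun t => if t ≤ dist x y then α t else β (t - dist x y)) := by
  obtain ⟨ha0, hax, hay, hαd⟩ := hα
  obtain ⟨hb0, hby, hbz, hβd⟩ := hβ
  set a := dist x y with ha
  set b := dist y z with hb
  set ζ : ℝ → X := fun t => if t ≤ a then α t else β (t - a) with hζ
  have hsum : a + b - dist x z ≤ 2 * p := by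
    have : dist y x = a := dist_comm y x
    linarith [hgp]
  have key : ∀ s ∈ Set.Icc (0:ℝ) (a+b), ∀ t ∈ Set.Icc (0:ℝ) (a+b), s ≤ t →
      |s - t| - 2*p ≤ dist (ζ s) (ζ t) ∧ dist (ζ s) (ζ t) ≤ |s - t| + 2*p := by
    intro s hs t ht hst
    have habs : |s - t| = t - s := by rw [abs_sub_comm]; exact abs_of_nonneg (by linarith)
    rcases le_or_gt t a with hta | hta
    · -- both on α
      have hsa : s ≤ a := le_trans hst hta
      have : dist (ζ s) (ζ t) = |s - t| := by
        simp only [hζ, if_pos hsa, if_pos hta]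
        exact hαd s ⟨hs.1, hsa⟩ t ⟨ht.1, hta⟩
      constructor <;> [linarith [this]; linarith [this]]
    · rcases le_or_gt s a with hsa | hsa
      · -- mixed case
        have htb : t - a ∈ Set.Icc (0:ℝ) b := ⟨by linarith, by linarith [ht.2]⟩
        have hζs : ζ s = α s := by simp [hζ, hsa]
        have hζt : ζ t = β (t - a) := by simp [hζ, not_le.mpr hta]
        have h1 : dist (α s) y = a - s := by
          have := hαd s ⟨hs.1, hsa⟩ a ⟨ha0, le_refl a⟩
          rw [hay] at this
          rw [this, abs_of_nonpos (by linarith)]; ring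
        have h2 : dist y (β (t - a)) = t - a := by
          have := hβd 0 ⟨le_refl 0, hb0⟩ (t - a) htb
          rw [hby] at this
          rw [this, abs_of_nonpos (by linarith)]; ring
        have h3 : dist x (α s) = s := by
          have := hαd 0 ⟨le_refl 0, ha0⟩ s ⟨hs.1, hsa⟩
          rw [hax] at this
          rw [this, abs_of_nonpos (by linarith [hs.1])]; ring
        have h4 : dist (β (t - a)) z = b - (t - a) := by
          have := hβd (t - a) htb b ⟨hb0, le_refl b⟩
          rw [hbz] at this
          rw [this, abs_of_nonpos (by linarith [ht.2])]; ring
        have hub : dist (α s) (β (t - a)) ≤ t - s := by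
          calc dist (α s) (β (t - a)) ≤ dist (α s) y + dist y (β (t - a)) := dist_triangle _ _ _
            _ = t - s := by rw [h1, h2]; ring
        have hlb : dist x z ≤ dist x (α s) + dist (α s) (β (t - a)) + dist (β (t - a)) z :=
          dist_triangle4 _ _ _ _
        rw [hζs, hζt, habs]
        constructor
        · rw [h3, h4] at hlb; linarith
        · linarith
      · -- both on β
        have hsb : s - a ∈ Set.Icc (0:ℝ) b := ⟨by linarith, by linarith [hs.2]⟩
        have htb : t - a ∈ Set.Icc (0:ℝ) b := ⟨by linarith, by linarith [ht.2]⟩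
        have : dist (ζ s) (ζ t) = |s - t| := by
          simp only [hζ, if_neg (not_le.mpr hsa), if_neg (not_le.mpr hta)]
          rw [hβd (s - a) hsb (t - a) htb]
          congr 1; ring
        constructor <;> [linarith [this]; linarith [this]]
  refine ⟨by positivity, ?_⟩
  intro s hs t ht
  rcases le_total s t with h | h
  · have := key s hs t ht h
    simpa using this
  · have := key t ht s hs h
    rw [dist_comm, abs_sub_comm] at this
    simpa using this

end Paper
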